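/- For all real numbers A, b with 0 < b ≤ A, the quantity β := 1 − sin(πb/A)/(πb/A) satisfies β ≥ b²/A². -/
import Mathlib

open Real

lemma sin_pi_mul_le (x : ℝ) (hx0 : 0 < x) (hx1 : x ≤ 1) :
    Real.sin (π * x) ≤ π * x * (1 - x ^ 2) := by
  have hx2 : x ^ 2 ≤ 1 := by nlinarith
  refine le_of_tendsto (Real.tendsto_euler_sin_prod x) ?_
  filter_upwards [Filter.eventually_ge_atTop 1] with n hn
  obtain ⟨m, rfl⟩ : ∃ m, n = m + 1 := ⟨n - 1, by omega⟩
  have hfac : ∀ j : ℕ, (0:ℝ) ≤ 1 - x ^ 2 / ((j : ℝ) + 1) ^ 2 := by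
    intro j
    have h1 : (1:ℝ) ≤ ((j : ℝ) + 1) ^ 2 := by
      nlinarith [Nat.cast_nonneg (α := ℝ) j]
    have : x ^ 2 / ((j : ℝ) + 1) ^ 2 ≤ 1 := by
      rw [div_le_one (by positivity)]; linarith
    linarith
  have key : ∏ j ∈ Finset.range (m + 1), ((1:ℝ) - x ^ 2 / ((j : ℝ) + 1) ^ 2)
      ≤ 1 - x ^ 2 := by
    rw [Finset.prod_range_succ']
    have h0 : ((1:ℝ) - x ^ 2 / ((0:ℕ) + 1) ^ 2) = 1 - x ^ 2 := by norm_num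
    rw [h0]
    have hprod : ∏ j ∈ Finset.range m, ((1:ℝ) - x ^ 2 / ((j : ℝ) + 1 + 1) ^ 2) ≤ 1 := by
      apply Finset.prod_le_one
      · intro j _
        have h1 : (1:ℝ) ≤ ((j : ℝ) + 1 + 1) ^ 2 := by nlinarith [Nat.cast_nonneg (α := ℝ) j]
        have : x ^ 2 / ((j : ℝ) + 1 + 1) ^ 2 ≤ 1 := by
          rw [div_le_one (by positivity)]; linarith
        linarith
      · intro j _
        have : (0:ℝ) ≤ x ^ 2 / ((j : ℝ) + 1 + 1) ^ 2 := by positivity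
        linarith
    have hnn : (0:ℝ) ≤ ∏ j ∈ Finset.range m, ((1:ℝ) - x ^ 2 / ((j : ℝ) + 1 + 1) ^ 2) :=
      Finset.prod_nonneg fun j _ => by
        have h1 : (1:ℝ) ≤ ((j : ℝ) + 1 + 1) ^ 2 := by nlinarith [Nat.cast_nonneg (α := ℝ) j]
        have : x ^ 2 / ((j : ℝ) + 1 + 1) ^ 2 ≤ 1 := by
          rw [div_le_one (by positivity)]; linarith
        linarith
    push_cast
    nlinarith
  have hπx : 0 < π * x := by positivity
  calc π * x * ∏ j ∈ Finset.range (m + 1), ((1:ℝ) - x ^ 2 / ((j : ℝ) + 1) ^ 2)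
      ≤ π * x * (1 - x ^ 2) := by nlinarith

theorem beta_lower_bound (A b : ℝ) (hb : 0 < b) (hbA : b ≤ A) :
    b ^ 2 / A ^ 2 ≤ 1 - Real.sin (π * b / A) / (π * b / A) := by
  have hA : 0 < A := lt_of_lt_of_le hb hbA
  set x := b / A with hx
  have hx0 : 0 < x := by positivity
  have hx1 : x ≤ 1 := by rw [hx, div_le_one hA]; exact hbA
  have hkey := sin_pi_mul_le x hx0 hx1
  have hπx : 0 < π * x := by positivity
  have h1 : Real.sin (π * x) / (π * x) ≤ 1 - x ^ 2 := by
    rw [div_le_iff₀ hπx]; linarith [hkey]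
  have h2 : π * b / A = π * x := by rw [hx]; ring
  have h3 : b ^ 2 / A ^ 2 = x ^ 2 := by rw [hx, div_pow]
  rw [h2, h3]; linarith
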